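/- Let F be a nonempty rooted forest. Then the polynomial S_F(x,y) is irreducible in ℤ[x,y] if and only if F is a tree. -/

import Mathlib

open MvPolynomial

/-- A rooted tree: a root node together with a list of branches. -/
inductive RTree : Type
  | node : List RTree → RTree

/-- A rooted forest: a finite (possibly empty) list of rooted trees. -/
abbrev RForest : Type := List RTree

namespace RTree

/-- Number of vertices of a rooted tree. -/
def size : RTree → ℕ
  | .node ts => 1 + (ts.attach.map fun s => size s.1).sum

  decreasing_by
    all_goals
      simp only [RTree.node.sizeOf_spec]
      have := List.sizeOf_lt_of_mem s.2
      omega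

/-- Number of leaves of a rooted tree. -/
def leafCount : RTree → ℕ
  | .node [] => 1
  | .node (t :: ts) => ((t :: ts).attach.map fun s => leafCount s.1).sum

  decreasing_by
    all_goals
      simp only [RTree.node.sizeOf_spec]
      have := List.sizeOf_lt_of_mem s.2
      omega

/-- The bivariate generating polynomial `P_T(x,y)` of leaf-induced subtrees of `T`,
counted by number of vertices (`X 0`) and number of leaves (`X 1`). -/
noncomputable def Ptree : RTree → MvPolynomial (Fin 2) ℤ
  | .node [] => 1 + X 0 * X 1
  | .node (t :: ts) =>
      1 - X 0 + X 0 * ((t :: ts).attach.map fun s => Ptree s.1).prod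

  decreasing_by
    all_goals
      simp only [RTree.node.sizeOf_spec]
      have := List.sizeOf_lt_of_mem s.2
      omega

/-- The polynomial `p_T(x) = 1 - P_T(x,-1)`. -/
noncomputable def pPol (T : RTree) : Polynomial ℤ :=
  1 - MvPolynomial.aeval ![Polynomial.X, -1] (Ptree T)

/-- The bivariate generating polynomial `S_T(x,y)` of subtrees of `T` (empty or connected
containing the root), counted by vertices (`X 0`) and boundary vertices (`X 1`). -/
noncomputable def Stree : RTree → MvPolynomial (Fin 2) ℤ
  | .node ts => X 1 + X 0 * (ts.attach.map fun s => Stree s.1).prod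

  decreasing_by
    all_goals
      simp only [RTree.node.sizeOf_spec]
      have := List.sizeOf_lt_of_mem s.2
      omega

/-- The bivariate generating polynomial `A_T(x,y)` of admissible subtrees of `T`,
counted by vertices (`X 0`) and boundary vertices (`X 1`). -/
noncomputable def Atree : RTree → MvPolynomial (Fin 2) ℤ
  | .node [] => X 1
  | .node (t :: ts) =>
      X 1 + X 0 * ((t :: ts).attach.map fun s => Atree s.1).prod

  decreasing_by
    all_goals
      simp only [RTree.node.sizeOf_spec]
      have := List.sizeOf_lt_of_mem s.2
      omega

/-- The trivariate polynomial `M_T(x,y,z)` (with `x = X 0`, `y = X 1`, `z = X 2`). -/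
noncomputable def Mtree : RTree → MvPolynomial (Fin 3) ℤ
  | .node ts =>
      Polynomial.aeval (X 2) (pPol (.node ts)).divX +
        X 0 * ∑ i : Fin ts.length,
          Mtree (ts.get i) *
            ∏ j ∈ Finset.univ.erase i,
              MvPolynomial.rename Fin.castSucc (Atree (ts.get j))
  decreasing_by
    simp only [RTree.node.sizeOf_spec]
    have h : sizeOf (ts.get i) < sizeOf ts := List.sizeOf_lt_of_mem (by simp)
    omega

/-- Number of vertices in the stem of a rooted tree. -/
def stemCount : RTree → ℕ
  | .node [t] => 1 + stemCount t
  | .node _ => 1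

/-- Isomorphism of rooted trees. -/
def Iso : RTree → RTree → Prop
  | .node ts, .node us =>
      ∃ σ : Fin ts.length ≃ Fin us.length,
        ∀ i : Fin ts.length, Iso (ts.get i) (us.get (σ i))
  decreasing_by
    simp only [RTree.node.sizeOf_spec]
    have h : sizeOf (ts.get i) < sizeOf ts := List.sizeOf_lt_of_mem (by simp)
    omega

end RTree

namespace RForest

open RTree

/-- Number of vertices of a rooted forest. -/
def size (F : RForest) : ℕ := (F.map RTree.size).sum

/-- Number of leaves of a rooted forest. -/
def leafCount (F : RForest) : ℕ := (F.map RTree.leafCount).sum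

/-- The polynomial `P_F` of a rooted forest: product over components. -/
noncomputable def Pforest (F : RForest) : MvPolynomial (Fin 2) ℤ := (F.map Ptree).prod

/-- The polynomial `S_F` of a rooted forest: product over components. -/
noncomputable def Sforest (F : RForest) : MvPolynomial (Fin 2) ℤ := (F.map Stree).prod

/-- Number of vertices in the stem of a rooted forest (`0` unless the forest is a tree). -/
def stemCount : RForest → ℕ
  | [T] => RTree.stemCount T
  | _ => 0

/-- Isomorphism of rooted forests: a matching of the components by isomorphisms. -/
def Iso (F G : RForest) : Prop :=
  ∃ σ : Fin F.length ≃ Fin G.length,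
    ∀ i : Fin F.length, RTree.Iso (F.get i) (G.get (σ i))

end RForest


namespace SAux

open Polynomial

/-- Strong induction principle for rooted trees. -/
theorem RTree.indOn (P : RTree → Prop) (h : ∀ ts : List RTree, (∀ t ∈ ts, P t) → P (.node ts)) :
    ∀ T, P T
  | .node ts => h ts (fun t ht => RTree.indOn P h t)
  decreasing_by
    simp only [RTree.node.sizeOf_spec]
    have := List.sizeOf_lt_of_mem ht
    omega

/-- Mirror of `Stree` in `ℤ[y][x]`. -/
noncomputable def S' : RTree → Polynomial (Polynomial ℤ)
  | .node ts => Polynomial.C Polynomial.X + Polynomial.X * (ts.attach.map fun s => S' s.1).prod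
  decreasing_by
    simp only [RTree.node.sizeOf_spec]
    have := List.sizeOf_lt_of_mem s.2
    omega

lemma S'_node (ts : List RTree) :
    S' (.node ts) = Polynomial.C Polynomial.X + Polynomial.X * (ts.map S').prod := by
  rw [S', List.attach_map_val]

lemma Stree_node (ts : List RTree) :
    RTree.Stree (.node ts) = X 1 + X 0 * (ts.map RTree.Stree).prod := by
  rw [RTree.Stree, List.attach_map_val]

/-- The isomorphism `MvPolynomial (Fin 2) ℤ ≃+* ℤ[y][x]`. -/
noncomputable def eIso : MvPolynomial (Fin 2) ℤ ≃+* Polynomial (Polynomial ℤ) :=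
  (MvPolynomial.finSuccEquiv ℤ 1).toRingEquiv.trans
    (Polynomial.mapEquiv ((MvPolynomial.finSuccEquiv ℤ 0).toRingEquiv.trans
      (Polynomial.mapEquiv (MvPolynomial.isEmptyAlgEquiv ℤ (Fin 0)).toRingEquiv)))

lemma eIso_X0 : eIso (X 0) = Polynomial.X := by
  simp [eIso, MvPolynomial.finSuccEquiv_X_zero, Polynomial.mapEquiv_apply]

lemma eIso_X1 : eIso (X 1) = Polynomial.C Polynomial.X := by
  have h1 : (MvPolynomial.finSuccEquiv ℤ 1) (X 1) = Polynomial.C (X 0) := by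
    have h2 : (1 : Fin 2) = Fin.succ 0 := rfl
    rw [h2, MvPolynomial.finSuccEquiv_X_succ]
  simp [eIso, Polynomial.mapEquiv_apply, h1, MvPolynomial.finSuccEquiv_X_zero,
    Polynomial.map_C, Polynomial.map_X]

lemma eIso_Stree : ∀ T : RTree, eIso (RTree.Stree T) = S' T := by
  refine RTree.indOn _ ?_
  intro ts ih
  rw [Stree_node, S'_node, map_add, map_mul, eIso_X0, eIso_X1, map_list_prod, List.map_map]
  congr 2
  exact congrArg List.prod (List.map_congr_left fun t ht => ih t ht)

lemma eIso_Sforest (F : RForest) : eIso (RForest.Sforest F) = (F.map S').prod := by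
  unfold RForest.Sforest
  rw [map_list_prod, List.map_map]
  exact congrArg List.prod (List.map_congr_left fun t _ => eIso_Stree t)

noncomputable abbrev ev0 : Polynomial ℤ →+* ℤ := Polynomial.evalRingHom 0

lemma list_helper (l : List (Polynomial (Polynomial ℤ)))
    (h : ∀ p ∈ l, p.Monic ∧ p.map ev0 = Polynomial.X ^ p.natDegree) :
    l.prod.Monic ∧ l.prod.map ev0 = Polynomial.X ^ l.prod.natDegree := by
  induction l with
  | nil => simp [Polynomial.monic_one]
  | cons a l ih =>
    obtain ⟨ha, ha'⟩ := h a List.mem_cons_self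
    obtain ⟨hl, hl'⟩ := ih fun p hp => h p (List.mem_cons_of_mem a hp)
    refine ⟨by rw [List.prod_cons]; exact ha.mul hl, ?_⟩
    rw [List.prod_cons, Polynomial.map_mul, ha', hl', ← pow_add,
      Polynomial.Monic.natDegree_mul ha hl]

lemma S'_props : ∀ T : RTree, (S' T).Monic ∧ 1 ≤ (S' T).natDegree ∧
    (S' T).coeff 0 = Polynomial.X ∧
    (S' T).map ev0 = Polynomial.X ^ (S' T).natDegree := by
  refine RTree.indOn _ ?_
  intro ts ih
  obtain ⟨hP, hP'⟩ := list_helper (ts.map S') (by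
    intro p hp
    obtain ⟨t, ht, rfl⟩ := List.mem_map.mp hp
    obtain ⟨h1, _, _, h4⟩ := ih t ht
    exact ⟨h1, h4⟩)
  set P := (ts.map S').prod with hPdef
  have hXP : (Polynomial.X * P).Monic := (Polynomial.monic_X).mul hP
  have hXPdeg : (Polynomial.X * P).natDegree = 1 + P.natDegree := by
    rw [Polynomial.natDegree_mul Polynomial.X_ne_zero hP.ne_zero, Polynomial.natDegree_X]
  have hmon : (S' (.node ts)).Monic := by
    rw [S'_node]
    refine Polynomial.Monic.add_of_right hXP ?_
    rw [Polynomial.degree_C Polynomial.X_ne_zero, Polynomial.degree_eq_natDegree hXP.ne_zero]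
    exact_mod_cast (by omega : 0 < (Polynomial.X * P).natDegree)
  have hdeg : (S' (.node ts)).natDegree = 1 + P.natDegree := by
    rw [S'_node, Polynomial.natDegree_add_eq_right_of_natDegree_lt, hXPdeg]
    rw [Polynomial.natDegree_C, hXPdeg]
    omega
  refine ⟨hmon, by omega, ?_, ?_⟩
  · rw [S'_node, Polynomial.coeff_add, Polynomial.coeff_C_zero, Polynomial.mul_coeff_zero,
      Polynomial.coeff_X_zero, zero_mul, add_zero]
  · rw [hdeg, S'_node, Polynomial.map_add, Polynomial.map_mul, Polynomial.map_C, Polynomial.map_X,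
      hP']
    simp only [ev0, Polynomial.coe_evalRingHom, Polynomial.eval_X, map_zero, Polynomial.C_0,
      zero_add]
    rw [← pow_succ', Nat.add_comm 1 P.natDegree]

lemma S'_key (T : RTree) (A B : Polynomial (Polynomial ℤ)) (hAB : A * B = S' T)
    (h0 : IsUnit (A.coeff 0)) : IsUnit A := by
  obtain ⟨hmon, hdeg, hc0, hmap⟩ := S'_props T
  have hlead : A.leadingCoeff * B.leadingCoeff = 1 := by
    rw [← Polynomial.leadingCoeff_mul, hAB, hmon.leadingCoeff]
  have hAl : IsUnit A.leadingCoeff := isUnit_iff_exists_inv.mpr ⟨_, hlead⟩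
  have hevl : ev0 A.leadingCoeff ≠ 0 := (hAl.map ev0).ne_zero
  have hdegmap : (A.map ev0).natDegree = A.natDegree :=
    Polynomial.natDegree_map_of_leadingCoeff_ne_zero ev0 hevl
  have hdvd : A.map ev0 ∣ Polynomial.X ^ (S' T).natDegree :=
    ⟨B.map ev0, by rw [← Polynomial.map_mul, hAB, hmap]⟩
  obtain ⟨i, hi, hassoc⟩ := (dvd_prime_pow Polynomial.prime_X _).mp hdvd
  have hcoeff : (A.map ev0).coeff 0 ≠ 0 := by
    rw [Polynomial.coeff_map]
    exact (h0.map ev0).ne_zero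
  rcases Nat.eq_zero_or_pos i with hi0 | hip
  · subst hi0
    rw [pow_zero, associated_one_iff_isUnit] at hassoc
    have hA0 : A.natDegree = 0 := by
      rw [← hdegmap]; exact Polynomial.natDegree_eq_zero_of_isUnit hassoc
    rw [Polynomial.eq_C_of_natDegree_eq_zero hA0]
    exact Polynomial.isUnit_C.mpr h0
  · exfalso
    have hXd : Polynomial.X ∣ A.map ev0 :=
      dvd_trans (dvd_pow_self _ hip.ne') hassoc.symm.dvd
    rw [Polynomial.X_dvd_iff] at hXd
    exact hcoeff hXd

lemma S'_not_unit (T : RTree) : ¬ IsUnit (S' T) := by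
  intro h
  obtain ⟨_, hdeg, _, _⟩ := S'_props T
  have := Polynomial.natDegree_eq_zero_of_isUnit h
  omega

lemma S'_irr (T : RTree) : Irreducible (S' T) := by
  obtain ⟨hmon, hdeg, hc0, hmap⟩ := S'_props T
  refine ⟨S'_not_unit T, ?_⟩
  intro A B hS
  have h0 : A.coeff 0 * B.coeff 0 = Polynomial.X := by
    rw [← Polynomial.mul_coeff_zero, ← hS]; exact hc0
  rcases (Polynomial.prime_X.irreducible).isUnit_or_isUnit h0.symm with h | h
  · exact Or.inl (S'_key T A B hS.symm h)
  · exact Or.inr (S'_key T B A (by rw [mul_comm]; exact hS.symm) h)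

end SAux

theorem stmt10 (F : RForest) (hF : F ≠ []) :
    Irreducible (RForest.Sforest F) ↔ F.length = 1 := by
  match F with
  | [] => exact absurd rfl hF
  | [T] =>
    refine ⟨fun _ => rfl, fun _ => ?_⟩
    refine (MulEquiv.irreducible_iff SAux.eIso).mp ?_
    rw [SAux.eIso_Sforest]
    simpa using SAux.S'_irr T
  | T1 :: T2 :: rest =>
    constructor
    · intro hirr
      exfalso
      have h1 : RForest.Sforest (T1 :: T2 :: rest) =
          RTree.Stree T1 * RForest.Sforest (T2 :: rest) := by
        unfold RForest.Sforest; rw [List.map_cons, List.prod_cons]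
      rcases hirr.isUnit_or_isUnit h1 with h | h
      · apply SAux.S'_not_unit T1
        rw [← SAux.eIso_Stree]
        exact h.map SAux.eIso
      · have h2 := h.map SAux.eIso
        rw [SAux.eIso_Sforest, List.map_cons, List.prod_cons] at h2
        exact SAux.S'_not_unit T2 (isUnit_of_mul_isUnit_left h2)
    · intro h
      exact absurd h (by simp)
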